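/- Let q = p^k with p prime and k a prime number, let s ≥ Büyük1 be an integer, and let e_1, …, e_s be distinct non-negative integers. Then the number S_{e_1,…,e_s}(q) of dynamical-equivalence classes among the maps F_q → F_q of the form x ↦ a_1 x^{e_1} + … + a_s x^{e_s} with a_1, …, a_s ∈ F_q^* satisfies, as an inequality of rational numbers, S_{e_1,…,e_s}(q) ≤ (q − 1)^s / k + ((k − 1)/k) · (p − 1)^s. -/

import Mathlib

/-- Two self-maps `f g : α → α` are dynamically equivalent if there is a bijection
`σ : α → α` with `σ⁻¹ ∘ g ∘ σ = f`. -/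
def DynEquiv {α : Type*} (f g : α → α) : Prop :=
  ∃ σ : Equiv.Perm α, ∀ x, σ.symm (g (σ x)) = f x

/-- The number of dynamical-equivalence classes represented by the elements of a set `S`
of self-maps. -/
noncomputable def numDynClasses {α : Type*} (S : Set (α → α)) : ℕ :=
  Nat.card (Quot (fun f g : S => DynEquiv f.1 g.1))

lemma myPowIter {M : Type*} [Monoid M] {u : M} {p n : ℕ} (hn : u ^ p ^ n = u) :
    ∀ t, u ^ p ^ (n * t) = u := by
  intro t
  induction t with
  | zero => simp
  | succ t ih =>
      have : p ^ (n * (t + 1)) = p ^ (n * t) * p ^ n := by rw [← pow_add, Nat.mul_succ]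
      rw [this, pow_mul, ih, hn]

lemma myCoprimeFix {M : Type*} [Monoid M] {u : M} {p m k : ℕ}
    (hm : u ^ p ^ m = u) (hkk : u ^ p ^ k = u) (hco : Nat.Coprime m k) (hk1 : 1 < k) :
    u ^ p = u := by
  obtain ⟨x, -, hx⟩ := Nat.exists_mul_mod_eq_one_of_coprime hco hk1
  have h1 : m * x = k * (m * x / k) + 1 := by
    conv_lhs => rw [← Nat.div_add_mod (m * x) k]
    rw [hx, Nat.mul_comm]
  have h2 : u ^ p ^ (m * x) = u := myPowIter hm x
  rw [h1, pow_add, pow_one, pow_mul, myPowIter hkk] at h2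
  exact h2

open Polynomial in
lemma myCardFix {F : Type*} [Field F] {p : ℕ} (hp : p.Prime) :
    Nat.card {u : Fˣ // (u : F) ^ p = u} ≤ p - 1 := by
  classical
  set q : F[X] := X ^ p - X with hq
  have hne : q ≠ 0 := by
    have : ((X : F[X]) ^ p).natDegree ≠ (X : F[X]).natDegree := by
      rw [natDegree_X_pow, natDegree_X]; exact hp.ne_one
    exact sub_ne_zero.mpr (fun h => this (by rw [h]))
  have hdeg : q.natDegree ≤ p := by
    refine le_trans (natDegree_sub_le _ _) ?_
    simp [natDegree_X_pow, natDegree_X, hp.one_lt.le]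
  have hcard : q.roots.toFinset.card ≤ p :=
    le_trans (Multiset.toFinset_card_le _) (le_trans q.card_roots' hdeg)
  have h0 : (0 : F) ∈ q.roots.toFinset := by
    rw [Multiset.mem_toFinset, mem_roots hne]
    simp [hq, IsRoot, zero_pow hp.ne_zero]
  have hinj : Function.Injective
      (fun u : {u : Fˣ // (u : F) ^ p = u} => (⟨(u.1 : F), by
        rw [Finset.mem_erase, Multiset.mem_toFinset, mem_roots hne]
        exact ⟨u.1.ne_zero, by simp [hq, IsRoot, u.2]⟩⟩ :
        {x : F // x ∈ q.roots.toFinset.erase 0})) := by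
    intro a b hab
    ext
    exact congrArg Subtype.val hab
  have := Nat.card_le_card_of_injective _ hinj
  rw [Nat.card_eq_fintype_card (α := {x : F // x ∈ q.roots.toFinset.erase 0}),
    Fintype.card_coe] at this
  refine le_trans this ?_
  rw [Finset.card_erase_of_mem h0]
  exact Nat.sub_le_sub_right hcard 1

lemma myCharP {F : Type*} [Field F] [Fintype F] {p k : ℕ} (hp : p.Prime)
    (hq : Fintype.card F = p ^ k) : CharP F p := by
  obtain ⟨p', hc⟩ := CharP.exists F
  haveI := hc
  obtain ⟨n, hp', hcard⟩ := FiniteField.card F p'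
  have hdvd : p' ∣ p := by
    have h1 : p' ∣ p ^ k := by
      rw [← hq, hcard]
      exact dvd_pow_self p' n.pos.ne'
    exact hp'.dvd_of_dvd_pow h1
  have : p' = p := ((Nat.prime_dvd_prime_iff_eq hp' hp).mp hdvd)
  rwa [this] at hc

/-- The Frobenius action of `ZMod k` on coefficient tuples. -/
def frobAction (F : Type*) [Field F] (p k s : ℕ) [NeZero k]
    (hcyc : ∀ u : Fˣ, u ^ p ^ k = u) :
    MulAction (Multiplicative (ZMod k)) (Fin s → Fˣ) where
  smul g a := fun i => a i ^ p ^ (Multiplicative.toAdd g).val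
  one_smul a := by
    funext i
    show a i ^ p ^ (Multiplicative.toAdd (1 : Multiplicative (ZMod k))).val = a i
    simp
  mul_smul g h a := by
    have hmod : ∀ (u : Fˣ) (n : ℕ), u ^ p ^ (n % k) = u ^ p ^ n := by
      intro u n
      conv_rhs => rw [← Nat.div_add_mod n k, pow_add, pow_mul, myPowIter (hcyc u)]
    funext i
    show a i ^ p ^ (Multiplicative.toAdd (g * h)).val
        = (a i ^ p ^ (Multiplicative.toAdd h).val) ^ p ^ (Multiplicative.toAdd g).val
    rw [← pow_mul, ← pow_add]
    have : (Multiplicative.toAdd (g * h)).val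
        = ((Multiplicative.toAdd g).val + (Multiplicative.toAdd h).val) % k := by
      rw [toAdd_mul, ZMod.val_add]
    rw [this, add_comm, hmod]

theorem stmt3 {F : Type*} [Field F] [Fintype F] (p k : ℕ) [Fact p.Prime] (hk : k.Prime)
    (hq : Fintype.card F = p ^ k)
    (s : ℕ) (hs : 1 ≤ s) (e : Fin s → ℕ) (he : Function.Injective e) :
    (numDynClasses {f : F → F | ∃ a : Fin s → Fˣ, f = fun x => ∑ i, (a i : F) * x ^ (e i)} : ℚ) ≤
      ((p : ℚ) ^ k - 1) ^ s / k + ((k : ℚ) - 1) / k * ((p : ℚ) - 1) ^ s := by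
  classical
  have hp : p.Prime := Fact.out
  haveI : CharP F p := myCharP hp hq
  haveI : NeZero k := ⟨hk.ne_zero⟩
  set S : Set (F → F) := {f | ∃ a : Fin s → Fˣ, f = fun x => ∑ i, (a i : F) * x ^ (e i)} with hS
  have hcyc : ∀ u : Fˣ, u ^ p ^ k = u := by
    intro u
    ext
    rw [Units.val_pow_eq_pow_val, ← hq]
    exact FiniteField.pow_card _
  letI := frobAction F p k s hcyc
  have hsmul : ∀ (g : Multiplicative (ZMod k)) (a : Fin s → Fˣ) (i : Fin s),
      (g • a) i = a i ^ p ^ (Multiplicative.toAdd g).val := fun _ _ _ => rfl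
  -- the map from tuples to maps
  set fmap : (Fin s → Fˣ) → (F → F) := fun a => fun x => ∑ i, (a i : F) * x ^ (e i) with hfmap
  have hmem : ∀ a : Fin s → Fˣ, fmap a ∈ S := fun a => ⟨a, rfl⟩
  haveI : ExpChar F p := inferInstance
  -- Frobenius power as a permutation of F
  have key : ∀ (g : Multiplicative (ZMod k)) (a : Fin s → Fˣ),
      DynEquiv (fmap a) (fmap (g • a)) := by
    intro g a
    set v := (Multiplicative.toAdd g).val with hv
    set ι : F →+* F := iterateFrobenius F p v with hι
    have hιdef : ∀ x : F, ι x = x ^ p ^ v := fun x => iterateFrobenius_def p v x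
    have hbij : Function.Bijective ι := Finite.injective_iff_bijective.mp ι.injective
    refine ⟨Equiv.ofBijective ι hbij, ?_⟩
    intro x
    rw [Equiv.symm_apply_eq]
    show fmap (g • a) (ι x) = ι (fmap a x)
    rw [hfmap]
    simp only
    rw [map_sum]
    refine Finset.sum_congr rfl ?_
    intro i _
    rw [map_mul, map_pow, hsmul, hιdef, hιdef, Units.val_pow_eq_pow_val, ← hv, ← pow_mul]
  -- the quotient surjection
  set r : S → S → Prop := fun f g => DynEquiv f.1 g.1 with hr
  set Φ : (Fin s → Fˣ) → Quot r := fun a => Quot.mk r ⟨fmap a, hmem a⟩ with hΦ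
  have hΦconst : ∀ (a b : Fin s → Fˣ), MulAction.orbitRel (Multiplicative (ZMod k)) _ a b →
      Φ a = Φ b := by
    intro a b hab
    obtain ⟨g, rfl⟩ : ∃ g : Multiplicative (ZMod k), g • b = a := hab
    exact (Quot.sound (show r ⟨fmap b, hmem b⟩ ⟨fmap (g • b), hmem _⟩ from key g b)).symm
  have hsurj : Function.Surjective
      (Quotient.lift Φ hΦconst :
        Quotient (MulAction.orbitRel (Multiplicative (ZMod k)) (Fin s → Fˣ)) → Quot r) := by
    intro x
    obtain ⟨⟨f, a, ha⟩, rfl⟩ := Quot.exists_rep x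
    exact ⟨Quotient.mk _ a, congrArg (Quot.mk r) (Subtype.ext ha.symm)⟩
  letI : Fintype Fˣ := Fintype.ofFinite _
  letI : Fintype (Quotient (MulAction.orbitRel (Multiplicative (ZMod k)) (Fin s → Fˣ))) :=
    Fintype.ofFinite _
  letI : Fintype (Multiplicative (ZMod k)) := Fintype.ofFinite _
  letI : ∀ g : Multiplicative (ZMod k), Fintype (MulAction.fixedBy (Fin s → Fˣ) g) :=
    fun g => Fintype.ofFinite _
  -- Burnside
  have hburn := MulAction.sum_card_fixedBy_eq_card_orbits_mul_card_group
    (Multiplicative (ZMod k)) (Fin s → Fˣ)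
  simp_rw [← Nat.card_eq_fintype_card] at hburn
  -- cardinalities
  have hcardG : Nat.card (Multiplicative (ZMod k)) = k := by
    rw [Nat.card_congr Multiplicative.toAdd, Nat.card_zmod]
  have hcardA : Nat.card (Fin s → Fˣ) = (p ^ k - 1) ^ s := by
    have h1 : Nat.card Fˣ = p ^ k - 1 := by
      rw [Nat.card_units, Nat.card_eq_fintype_card, hq]
    rw [Nat.card_pi, Finset.prod_const, Finset.card_univ, Fintype.card_fin, h1]
  have hfix1 : Nat.card (MulAction.fixedBy (Fin s → Fˣ) (1 : Multiplicative (ZMod k)))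
      = (p ^ k - 1) ^ s := by
    rw [← hcardA]
    have : MulAction.fixedBy (Fin s → Fˣ) (1 : Multiplicative (ZMod k)) = Set.univ := by
      ext a
      simp [MulAction.fixedBy]
    rw [this]
    exact Nat.card_congr (Equiv.Set.univ _)
  have hfixg : ∀ g : Multiplicative (ZMod k), g ≠ 1 →
      Nat.card (MulAction.fixedBy (Fin s → Fˣ) g) ≤ (p - 1) ^ s := by
    intro g hg
    set v := (Multiplicative.toAdd g).val with hv
    have hv0 : v ≠ 0 := by
      rw [hv, Ne, ZMod.val_eq_zero]
      intro h
      exact hg (by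
        have : Multiplicative.toAdd g = Multiplicative.toAdd (1 : Multiplicative (ZMod k)) := h
        exact Multiplicative.toAdd.injective this)
    have hco : Nat.Coprime v k := by
      refine Nat.Coprime.symm ((hk.coprime_iff_not_dvd).mpr ?_)
      exact Nat.not_dvd_of_pos_of_lt (Nat.pos_of_ne_zero hv0) (ZMod.val_lt _)
    have hΨinj : Function.Injective
        (fun b : MulAction.fixedBy (Fin s → Fˣ) g =>
          (fun i => (⟨b.1 i, by
            have h1 : b.1 i ^ p ^ v = b.1 i := by
              have := congrFun b.2 i
              rwa [hsmul, ← hv] at this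
            have h2 : b.1 i ^ p = b.1 i := myCoprimeFix h1 (hcyc _) hco hk.one_lt
            calc ((b.1 i : Fˣ) : F) ^ p = ((b.1 i ^ p : Fˣ) : F) := by
                  rw [Units.val_pow_eq_pow_val]
              _ = b.1 i := by rw [h2]⟩ : {u : Fˣ // (u : F) ^ p = u}) :
            Fin s → {u : Fˣ // (u : F) ^ p = u})) := by
      intro a b hab
      exact Subtype.ext (funext fun i => congrArg Subtype.val (congrFun hab i))
    refine le_trans (Nat.card_le_card_of_injective _ hΨinj) ?_
    rw [Nat.card_pi]
    have hR : Nat.card {u : Fˣ // (u : F) ^ p = u} ≤ p - 1 := myCardFix hp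
    calc (∏ _i : Fin s, Nat.card {u : Fˣ // (u : F) ^ p = u})
        = Nat.card {u : Fˣ // (u : F) ^ p = u} ^ s := by
          simp [Finset.prod_const]
      _ ≤ (p - 1) ^ s := Nat.pow_le_pow_left hR s
  -- combine
  have hsum : ∑ g : Multiplicative (ZMod k), Nat.card (MulAction.fixedBy (Fin s → Fˣ) g)
      ≤ (k - 1) * (p - 1) ^ s + (p ^ k - 1) ^ s := by
    rw [← Finset.sum_erase_add _ _ (Finset.mem_univ 1), hfix1]
    refine Nat.add_le_add ?_ le_rfl
    refine le_trans (Finset.sum_le_card_nsmul _ _ ((p - 1) ^ s)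
      fun g hg => hfixg g (Finset.ne_of_mem_erase hg)) ?_
    rw [smul_eq_mul, Finset.card_erase_of_mem (Finset.mem_univ 1), Finset.card_univ,
      ← Nat.card_eq_fintype_card, hcardG]
  have hOk : Nat.card (Quotient (MulAction.orbitRel (Multiplicative (ZMod k)) (Fin s → Fˣ))) * k
      ≤ (k - 1) * (p - 1) ^ s + (p ^ k - 1) ^ s := by
    rw [hcardG] at hburn
    rw [← hburn]
    exact hsum
  have hCO : numDynClasses S
      ≤ Nat.card (Quotient (MulAction.orbitRel (Multiplicative (ZMod k)) (Fin s → Fˣ))) := by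
    rw [numDynClasses]
    exact Nat.card_le_card_of_surjective _ hsurj
  -- numerics
  have hk0 : (0 : ℚ) < (k : ℚ) := by exact_mod_cast hk.pos
  set O := Nat.card (Quotient (MulAction.orbitRel (Multiplicative (ZMod k)) (Fin s → Fˣ)))
  have hfinal : (numDynClasses S : ℚ) ≤ (((k - 1) * (p - 1) ^ s + (p ^ k - 1) ^ s : ℕ) : ℚ) / k := by
    have h1 : (numDynClasses S : ℚ) ≤ (O : ℚ) := by exact_mod_cast hCO
    have h2 : ((O * k : ℕ) : ℚ) ≤ (((k - 1) * (p - 1) ^ s + (p ^ k - 1) ^ s : ℕ) : ℚ) := by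
      exact_mod_cast hOk
    have h3 : (O : ℚ) ≤ (((k - 1) * (p - 1) ^ s + (p ^ k - 1) ^ s : ℕ) : ℚ) / k := by
      rw [le_div_iff₀ hk0]
      exact_mod_cast h2
    exact le_trans h1 h3
  refine le_trans hfinal (le_of_eq ?_)
  have hp1 : 1 ≤ p := hp.one_lt.le
  have hpk1 : 1 ≤ p ^ k := Nat.one_le_pow _ _ hp.pos
  have hk1 : 1 ≤ k := hk.pos
  push_cast [Nat.cast_sub hpk1, Nat.cast_sub hp1, Nat.cast_sub hk1]
  field_simp
  ring
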